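/- (Grenander–Szegő) Let f : ℝ → ℝ be a continuous 2π-periodic real-valued function, and for each integer k let t_k = (1/2π)∫_{−π}^{π} f(x) e^{−ikx} dx be its k-th Fourier coefficient. For n ≥ 1 let T_n be the n × n Toeplitz matrix with entries (T_n)_{j,l} = t_{j−l} for 1 ≤ j, l ≤ n. Then T_n is Hermitian, and every eigenvalue μ of T_n satisfies f_min ≤ μ ≤ f_max, where f_min and f_max are the minimum and maximum values of f. Moreover, if f_min < f_max, then f_min < μ < f_max for every eigenvalue μ and every n ≥ 1; and if f_min ≥ 0 and f_min < f_max, then T_n is positive definite. -/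

import Mathlib

open scoped ComplexOrder

set_option maxHeartbeats 1000000

noncomputable def gsQ {n : ℕ} (v : Fin n → ℂ) (x : ℝ) : ℂ :=
  ∑ l : Fin n, v l * Complex.exp (Complex.I * ((l : ℕ) : ℂ) * (x : ℂ))

lemma gsQ_cont {n : ℕ} (v : Fin n → ℂ) : Continuous (gsQ v) := by
  unfold gsQ
  exact continuous_finset_sum _ fun l _ => by fun_prop

lemma gs_int_exp (m : ℤ) :
    ∫ x in (-Real.pi)..Real.pi, Complex.exp (Complex.I * (m:ℂ) * x)
      = if m = 0 then (2 * Real.pi : ℂ) else 0 := by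
  rcases eq_or_ne m 0 with rfl | hm
  · simp [two_mul]
  · simp only [if_neg hm]
    have hc : (Complex.I * (m:ℂ)) ≠ 0 := by simp [Complex.I_ne_zero, hm]
    rw [show (fun x : ℝ => Complex.exp (Complex.I * (m:ℂ) * x))
        = fun x : ℝ => Complex.exp ((Complex.I * m) * x) from rfl]
    rw [integral_exp_mul_complex hc]
    have key : ∀ k : ℤ, Complex.exp (Complex.I * (k:ℂ) * (Real.pi:ℂ)) = (-1 : ℂ) ^ k := by
      intro k
      rw [show Complex.I * (k:ℂ) * (Real.pi:ℂ) = (k:ℂ) * ((Real.pi:ℂ) * Complex.I) by ring,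
        Complex.exp_int_mul, Complex.exp_pi_mul_I]
    have h2 : Complex.I * (m:ℂ) * ((-Real.pi : ℝ) : ℂ) = Complex.I * ((-m : ℤ):ℂ) * (Real.pi:ℂ) := by
      push_cast; ring
    have hsq : ((-1 : ℂ) ^ m) * ((-1:ℂ) ^ m) = 1 := by
      rw [← zpow_add₀ (by norm_num : (-1:ℂ) ≠ 0), show m + m = 2 * m by ring, zpow_mul]
      norm_num
    have hneg : ((-1 : ℂ)) ^ (-m) = (-1:ℂ) ^ m := by
      rw [zpow_neg, inv_eq_of_mul_eq_one_right hsq]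
    rw [show Complex.I * (m:ℂ) * ((Real.pi : ℝ) : ℂ) = Complex.I * (m:ℂ) * (Real.pi:ℂ) by norm_num]
    rw [h2, key, key, hneg, sub_self, zero_div]

lemma gs_orth {n : ℕ} (j l : Fin n) :
    ∫ x in (-Real.pi)..Real.pi,
        Complex.exp (Complex.I * (((l : ℕ) : ℂ) - ((j : ℕ) : ℂ)) * x)
      = if j = l then (2 * Real.pi : ℂ) else 0 := by
  have : (((l : ℕ) : ℂ) - ((j : ℕ) : ℂ)) = (((l : ℤ) - (j : ℤ) : ℤ) : ℂ) := by push_cast; ring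
  rw [this, gs_int_exp]
  rcases eq_or_ne j l with rfl | h
  · simp
  · rw [if_neg h, if_neg]
    intro hh
    rw [sub_eq_zero] at hh
    exact h (Fin.ext (by exact_mod_cast hh.symm))

lemma gs_normSq_expand {n : ℕ} (v : Fin n → ℂ) (x : ℝ) :
    (Complex.normSq (gsQ v x) : ℂ)
      = ∑ j : Fin n, ∑ l : Fin n, (starRingEnd ℂ) (v j) * v l *
          Complex.exp (Complex.I * (((l : ℕ) : ℂ) - ((j : ℕ) : ℂ)) * x) := by
  rw [Complex.normSq_eq_conj_mul_self]
  unfold gsQ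
  rw [map_sum, Finset.sum_mul_sum]
  refine Finset.sum_congr rfl fun j _ => Finset.sum_congr rfl fun l _ => ?_
  rw [map_mul, ← Complex.exp_conj]
  have h1 : (starRingEnd ℂ) (Complex.I * ((j : ℕ) : ℂ) * (x : ℂ))
      = -(Complex.I * ((j : ℕ) : ℂ) * (x : ℂ)) := by
    simp [map_mul, Complex.conj_I, Complex.conj_ofReal, Complex.conj_natCast]
  have h2 : Complex.exp (-(Complex.I * ((j : ℕ) : ℂ) * (x : ℂ))) *
        Complex.exp (Complex.I * ((l : ℕ) : ℂ) * (x : ℂ))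
      = Complex.exp (Complex.I * (((l : ℕ) : ℂ) - ((j : ℕ) : ℂ)) * (x : ℂ)) := by
    rw [← Complex.exp_add]; ring_nf
  rw [h1, ← h2]; ring

lemma gs_N_complex {n : ℕ} (v : Fin n → ℂ) :
    ∫ x in (-Real.pi)..Real.pi, (Complex.normSq (gsQ v x) : ℂ)
      = 2 * Real.pi * ∑ l : Fin n, (Complex.normSq (v l) : ℂ) := by
  have hInt : ∀ (j l : Fin n), IntervalIntegrable
      (fun x : ℝ => (starRingEnd ℂ) (v j) * v l *
        Complex.exp (Complex.I * (((l : ℕ) : ℂ) - ((j : ℕ) : ℂ)) * x))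
      MeasureTheory.volume (-Real.pi) Real.pi := by
    intro j l
    exact (Continuous.intervalIntegrable (by fun_prop) _ _)
  calc ∫ x in (-Real.pi)..Real.pi, (Complex.normSq (gsQ v x) : ℂ)
      = ∫ x in (-Real.pi)..Real.pi, ∑ p ∈ Finset.univ ×ˢ (Finset.univ : Finset (Fin n)),
          (starRingEnd ℂ) (v p.1) * v p.2 *
            Complex.exp (Complex.I * (((p.2 : ℕ) : ℂ) - ((p.1 : ℕ) : ℂ)) * x) := by
        simp_rw [gs_normSq_expand, ← Finset.sum_product']
    _ = ∑ p ∈ Finset.univ ×ˢ (Finset.univ : Finset (Fin n)),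
          ∫ x in (-Real.pi)..Real.pi, (starRingEnd ℂ) (v p.1) * v p.2 *
            Complex.exp (Complex.I * (((p.2 : ℕ) : ℂ) - ((p.1 : ℕ) : ℂ)) * x) := by
        exact intervalIntegral.integral_finset_sum (fun p _ => hInt p.1 p.2)
    _ = ∑ p ∈ Finset.univ ×ˢ (Finset.univ : Finset (Fin n)),
          (starRingEnd ℂ) (v p.1) * v p.2 * (if p.1 = p.2 then (2 * Real.pi : ℂ) else 0) := by
        refine Finset.sum_congr rfl fun p _ => ?_
        rw [intervalIntegral.integral_const_mul, gs_orth]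
    _ = 2 * Real.pi * ∑ l : Fin n, (Complex.normSq (v l) : ℂ) := by
        rw [Finset.sum_product' (f := fun j l => (starRingEnd ℂ) (v j) * v l *
          if j = l then (2 * Real.pi : ℂ) else 0)]
        rw [Finset.mul_sum]
        refine Finset.sum_congr rfl fun j _ => ?_
        rw [Finset.sum_eq_single j]
        · simp [Complex.normSq_eq_conj_mul_self]; ring
        · intro l _ hl; simp [Ne.symm hl]
        · simp
open Complex in
lemma gs_N {n : ℕ} (v : Fin n → ℂ) :
    ∫ x in (-Real.pi)..Real.pi, Complex.normSq (gsQ v x)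
      = 2 * Real.pi * ∑ l : Fin n, Complex.normSq (v l) := by
  have hc := gs_N_complex v
  rw [intervalIntegral.integral_ofReal] at hc
  exact_mod_cast hc
lemma gs_quad {n : ℕ} (f : ℝ → ℝ) (hf : Continuous f) (t : ℤ → ℂ)
    (ht : ∀ k : ℤ, t k = (1 / (2 * Real.pi)) *
      ∫ x : ℝ in (-Real.pi)..Real.pi, ((f x : ℂ) * Complex.exp (-Complex.I * (k : ℂ) * (x : ℂ))))
    (T : Matrix (Fin n) (Fin n) ℂ)
    (hT : ∀ j l : Fin n, T j l = t ((j : ℤ) - (l : ℤ)))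
    (v : Fin n → ℂ) :
    dotProduct (star v) (T.mulVec v)
      = (((1 / (2 * Real.pi)) *
          ∫ x in (-Real.pi)..Real.pi, f x * Complex.normSq (gsQ v x) : ℝ) : ℂ) := by
  have hTjl : ∀ j l : Fin n, T j l = (1 / (2 * Real.pi) : ℂ) *
      ∫ x in (-Real.pi)..Real.pi, (f x : ℂ) *
        Complex.exp (Complex.I * (((l : ℕ) : ℂ) - ((j : ℕ) : ℂ)) * x) := by
    intro j l
    rw [hT, ht]
    congr 1
    apply intervalIntegral.integral_congr
    intro x _
    congr 1
    congr 1
    push_cast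
    ring
  have hIntc : ∀ (p : Fin n × Fin n), IntervalIntegrable
      (fun x : ℝ => (starRingEnd ℂ) (v p.1) * v p.2 * ((f x : ℂ) *
        Complex.exp (Complex.I * (((p.2 : ℕ) : ℂ) - ((p.1 : ℕ) : ℂ)) * x)))
      MeasureTheory.volume (-Real.pi) Real.pi := by
    intro p
    exact Continuous.intervalIntegrable (by fun_prop) _ _
  calc dotProduct (star v) (T.mulVec v)
      = ∑ p ∈ Finset.univ ×ˢ (Finset.univ : Finset (Fin n)),
          (starRingEnd ℂ) (v p.1) * v p.2 * T p.1 p.2 := by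
        rw [Finset.sum_product' (f := fun j l => (starRingEnd ℂ) (v j) * v l * T j l)]
        simp only [dotProduct, Matrix.mulVec, Pi.star_apply, RCLike.star_def,
          Finset.mul_sum]
        exact Finset.sum_congr rfl fun j _ => Finset.sum_congr rfl fun l _ => by ring
    _ = ∑ p ∈ Finset.univ ×ˢ (Finset.univ : Finset (Fin n)),
          (1 / (2 * Real.pi) : ℂ) * ∫ x in (-Real.pi)..Real.pi,
            (starRingEnd ℂ) (v p.1) * v p.2 * ((f x : ℂ) *
              Complex.exp (Complex.I * (((p.2 : ℕ) : ℂ) - ((p.1 : ℕ) : ℂ)) * x)) := by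
        refine Finset.sum_congr rfl fun p _ => ?_
        rw [hTjl p.1 p.2, intervalIntegral.integral_const_mul]
        ring
    _ = (1 / (2 * Real.pi) : ℂ) * ∫ x in (-Real.pi)..Real.pi,
          ∑ p ∈ Finset.univ ×ˢ (Finset.univ : Finset (Fin n)),
            (starRingEnd ℂ) (v p.1) * v p.2 * ((f x : ℂ) *
              Complex.exp (Complex.I * (((p.2 : ℕ) : ℂ) - ((p.1 : ℕ) : ℂ)) * x)) := by
        rw [← Finset.mul_sum, intervalIntegral.integral_finset_sum (fun p _ => hIntc p)]
    _ = (1 / (2 * Real.pi) : ℂ) * ∫ x in (-Real.pi)..Real.pi,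
          ((f x * Complex.normSq (gsQ v x) : ℝ) : ℂ) := by
        congr 1
        apply intervalIntegral.integral_congr
        intro x _
        push_cast
        rw [gs_normSq_expand]
        rw [← Finset.sum_product' (f := fun j l => (starRingEnd ℂ) (v j) * v l *
          Complex.exp (Complex.I * (((l : ℕ) : ℂ) - ((j : ℕ) : ℂ)) * x))]
        rw [Finset.mul_sum]
        exact Finset.sum_congr rfl fun p _ => by ring
    _ = (((1 / (2 * Real.pi)) *
          ∫ x in (-Real.pi)..Real.pi, f x * Complex.normSq (gsQ v x) : ℝ) : ℂ) := by
        rw [intervalIntegral.integral_ofReal]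
        push_cast
        ring

lemma gs_exists_ne_zero {n : ℕ} {v : Fin n → ℂ} (hv : v ≠ 0) {a b : ℝ}
    (ha : -Real.pi ≤ a) (hb : b ≤ Real.pi) (hab : a < b) :
    ∃ x ∈ Set.Ioo a b, gsQ v x ≠ 0 := by
  set P : Polynomial ℂ := ∑ l : Fin n, Polynomial.C (v l) * Polynomial.X ^ (l : ℕ) with hPdef
  obtain ⟨l₀, hl₀⟩ := Function.ne_iff.mp hv
  have hcoeff : P.coeff (l₀ : ℕ) = v l₀ := by
    rw [hPdef, Polynomial.finset_sum_coeff]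
    rw [Finset.sum_eq_single l₀]
    · simp
    · intro l _ hl
      have : ((l₀ : ℕ) : ℕ) ≠ (l : ℕ) := fun h => hl (Fin.ext h.symm)
      simp [Polynomial.coeff_C_mul, Polynomial.coeff_X_pow, if_neg this]
    · simp
  have hP : P ≠ 0 := fun h => hl₀ (by simpa [h] using hcoeff.symm)
  have heval : ∀ x : ℝ, gsQ v x = P.eval (Complex.exp (Complex.I * x)) := by
    intro x
    rw [hPdef, Polynomial.eval_finset_sum]
    unfold gsQ
    refine Finset.sum_congr rfl fun l _ => ?_
    rw [Polynomial.eval_mul, Polynomial.eval_C, Polynomial.eval_pow, Polynomial.eval_X]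
    rw [← Complex.exp_nat_mul]
    congr 2
    push_cast
    ring
  by_contra hcon
  push_neg at hcon
  have hinj : Set.InjOn (fun x : ℝ => Complex.exp (Complex.I * x)) (Set.Ioo a b) := by
    intro x hx y hy hxy
    obtain ⟨k, hk⟩ := Complex.exp_eq_exp_iff_exists_int.mp hxy
    have h2 : Complex.I * ((x : ℂ) - ((y : ℂ) + (k : ℂ) * (2 * (Real.pi : ℂ)))) = 0 := by
      linear_combination hk
    rcases mul_eq_zero.mp h2 with h | h
    · exact absurd h Complex.I_ne_zero
    · have h3 : (x : ℂ) = ((y + k * (2 * Real.pi) : ℝ) : ℂ) := by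
        push_cast
        linear_combination h
      have h4 : x = y + k * (2 * Real.pi) := by exact_mod_cast h3
      have hpi := Real.pi_pos
      have hbd : -(2 * Real.pi) < (k : ℝ) * (2 * Real.pi) ∧
          (k : ℝ) * (2 * Real.pi) < 2 * Real.pi := by
        constructor <;> nlinarith [hx.1, hx.2, hy.1, hy.2]
      have hk1 : (-1 : ℝ) < (k : ℝ) := by nlinarith [hbd.1]
      have hk2 : (k : ℝ) < 1 := by nlinarith [hbd.2]
      have : k = 0 := by
        have h5 : (-1 : ℤ) < k := by exact_mod_cast hk1
        have h6 : (k : ℤ) < 1 := by exact_mod_cast hk2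
        omega
      rw [this] at h4
      simpa using h4
  have hmaps : ∀ x ∈ Set.Ioo a b, Complex.exp (Complex.I * x) ∈ {z : ℂ | P.IsRoot z} := by
    intro x hx
    have := hcon x hx
    rw [heval x] at this
    exact this
  have hfin : (Set.Ioo a b).Finite := by
    refine Set.Finite.of_finite_image ?_ hinj
    exact Set.Finite.subset (Polynomial.finite_setOf_isRoot hP)
      (by rintro z ⟨x, hx, rfl⟩; exact hmaps x hx)
  exact (Set.Ioo_infinite hab) hfin

lemma gsQ_cont' {n : ℕ} (v : Fin n → ℂ) : Continuous (gsQ v) := by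
  unfold gsQ
  exact continuous_finset_sum _ fun l _ => by fun_prop

lemma gs_pos {n : ℕ} (φ : ℝ → ℝ) (hc : Continuous φ)
    (hper : ∀ x, φ (x + 2 * Real.pi) = φ x) (h0 : ∀ x, 0 ≤ φ x)
    (y : ℝ) (hy : 0 < φ y) (v : Fin n → ℂ) (hv : v ≠ 0) :
    0 < ∫ x in (-Real.pi)..Real.pi, φ x * Complex.normSq (gsQ v x) := by
  have hpi := Real.pi_pos
  -- find x₀ ∈ [-π, π) with φ x₀ > 0
  have hφper : Function.Periodic φ (2 * Real.pi) := hper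
  obtain ⟨x₀, hx₀mem, hx₀eq⟩ := hφper.exists_mem_Ico (by linarith) y (-Real.pi)
  rw [show -Real.pi + 2 * Real.pi = Real.pi by ring] at hx₀mem
  have hx₀pos : 0 < φ x₀ := hx₀eq ▸ hy
  -- open set where φ > 0
  have hUopen : IsOpen {x : ℝ | 0 < φ x} := isOpen_lt continuous_const hc
  obtain ⟨ε, hε, hball⟩ := Metric.isOpen_iff.mp hUopen x₀ hx₀pos
  rw [Real.ball_eq_Ioo] at hball
  set a' := max (x₀ - ε) (-Real.pi) with ha'
  set b' := min (x₀ + ε) Real.pi with hb'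
  have ha'le : a' ≤ x₀ := max_le (by linarith) hx₀mem.1
  have hb'gt : x₀ < b' := lt_min (by linarith) hx₀mem.2
  have hab' : a' < b' := lt_of_le_of_lt ha'le hb'gt
  have hsub : Set.Ioo a' b' ⊆ {x : ℝ | 0 < φ x} := fun x hx =>
    hball ⟨lt_of_le_of_lt (le_max_left _ _) hx.1, lt_of_lt_of_le hx.2 (min_le_left _ _)⟩
  obtain ⟨x₁, hx₁mem, hx₁ne⟩ := gs_exists_ne_zero hv (le_max_right _ _ : -Real.pi ≤ a')
    (min_le_right _ _ : b' ≤ Real.pi) hab'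
  set g : ℝ → ℝ := fun x => φ x * Complex.normSq (gsQ v x) with hg
  have hgcont : Continuous g := by
    apply hc.mul
    exact Complex.continuous_normSq.comp (gsQ_cont' v)
  have hgnonneg : ∀ x, 0 ≤ g x := fun x => mul_nonneg (h0 x) (Complex.normSq_nonneg _)
  have hgx₁ : 0 < g x₁ :=
    mul_pos (hsub hx₁mem) (Complex.normSq_pos.mpr hx₁ne)
  have hgopen : IsOpen {x : ℝ | 0 < g x} := isOpen_lt continuous_const hgcont
  obtain ⟨δ, hδ, hδball⟩ := Metric.isOpen_iff.mp hgopen x₁ hgx₁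
  rw [Real.ball_eq_Ioo] at hδball
  have hx₁Ioo : x₁ ∈ Set.Ioo (-Real.pi) Real.pi :=
    ⟨lt_of_le_of_lt (le_max_right _ _) hx₁mem.1, lt_of_lt_of_le hx₁mem.2 (min_le_right _ _)⟩
  have hgi : IntervalIntegrable g MeasureTheory.volume (-Real.pi) Real.pi :=
    hgcont.intervalIntegrable _ _
  rw [intervalIntegral.integral_pos_iff_support_of_nonneg_ae
    (MeasureTheory.ae_of_all _ hgnonneg) hgi]
  refine ⟨by linarith, ?_⟩
  set c := max (x₁ - δ) (-Real.pi) with hc'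
  set d := min (x₁ + δ) Real.pi with hd'
  have hcd : c < d :=
    lt_of_le_of_lt (max_le (by linarith) hx₁Ioo.1.le)
      (lt_min (by linarith) hx₁Ioo.2)
  have hsub2 : Set.Ioo c d ⊆ Function.support g ∩ Set.Ioc (-Real.pi) Real.pi := by
    intro x hx
    constructor
    · exact Function.mem_support.mpr (ne_of_gt (hδball
        ⟨lt_of_le_of_lt (le_max_left _ _) hx.1, lt_of_lt_of_le hx.2 (min_le_left _ _)⟩))
    · exact ⟨lt_of_le_of_lt (le_max_right _ _) hx.1,
        le_trans hx.2.le (min_le_right _ _)⟩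
  calc (0 : ENNReal) < MeasureTheory.volume (Set.Ioo c d) := by
        rw [Real.volume_Ioo]
        simp [ENNReal.ofReal_pos, sub_pos, hcd]
    _ ≤ _ := MeasureTheory.measure_mono hsub2
  -- hcd : max(x₁-δ, -π) < x₁? need c ≤ x₁? max of (x₁ - δ < x₁) and (-π ≤ x₁): x₁ > -π strict so ≤; ok used .le
lemma gs_lower {n : ℕ} (f : ℝ → ℝ) (hf : Continuous f) (c : ℝ) (hc : ∀ x, c ≤ f x)
    (v : Fin n → ℂ) :
    c * (∑ l : Fin n, Complex.normSq (v l)) ≤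
      (1 / (2 * Real.pi)) * ∫ x in (-Real.pi)..Real.pi, f x * Complex.normSq (gsQ v x) := by
  have hpi := Real.pi_pos
  have hint1 : IntervalIntegrable (fun x => f x * Complex.normSq (gsQ v x))
      MeasureTheory.volume (-Real.pi) Real.pi :=
    (hf.mul (Complex.continuous_normSq.comp (gsQ_cont v))).intervalIntegrable _ _
  have hint2 : IntervalIntegrable (fun x => c * Complex.normSq (gsQ v x))
      MeasureTheory.volume (-Real.pi) Real.pi :=
    ((continuous_const.mul (Complex.continuous_normSq.comp (gsQ_cont v)))).intervalIntegrable _ _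
  have hmono : (∫ x in (-Real.pi)..Real.pi, c * Complex.normSq (gsQ v x)) ≤
      ∫ x in (-Real.pi)..Real.pi, f x * Complex.normSq (gsQ v x) := by
    apply intervalIntegral.integral_mono_on (by linarith) hint2 hint1
    intro x _
    exact mul_le_mul_of_nonneg_right (hc x) (Complex.normSq_nonneg _)
  have hval : (∫ x in (-Real.pi)..Real.pi, c * Complex.normSq (gsQ v x))
      = c * (2 * Real.pi * ∑ l : Fin n, Complex.normSq (v l)) := by
    rw [intervalIntegral.integral_const_mul, gs_N]
  calc c * (∑ l : Fin n, Complex.normSq (v l))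
      = (1 / (2 * Real.pi)) * (c * (2 * Real.pi * ∑ l : Fin n, Complex.normSq (v l))) := by
        field_simp
    _ ≤ (1 / (2 * Real.pi)) * ∫ x in (-Real.pi)..Real.pi, f x * Complex.normSq (gsQ v x) := by
        apply mul_le_mul_of_nonneg_left _ (by positivity)
        rw [← hval]; exact hmono

lemma gs_lower_strict {n : ℕ} (f : ℝ → ℝ) (hf : Continuous f)
    (hper : ∀ x, f (x + 2 * Real.pi) = f x) (c : ℝ) (hc : ∀ x, c ≤ f x)
    (y : ℝ) (hy : c < f y) (v : Fin n → ℂ) (hv : v ≠ 0) :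
    c * (∑ l : Fin n, Complex.normSq (v l)) <
      (1 / (2 * Real.pi)) * ∫ x in (-Real.pi)..Real.pi, f x * Complex.normSq (gsQ v x) := by
  have hpi := Real.pi_pos
  have hint1 : IntervalIntegrable (fun x => f x * Complex.normSq (gsQ v x))
      MeasureTheory.volume (-Real.pi) Real.pi :=
    (hf.mul (Complex.continuous_normSq.comp (gsQ_cont v))).intervalIntegrable _ _
  have hint2 : IntervalIntegrable (fun x => c * Complex.normSq (gsQ v x))
      MeasureTheory.volume (-Real.pi) Real.pi :=
    ((continuous_const.mul (Complex.continuous_normSq.comp (gsQ_cont v)))).intervalIntegrable _ _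
  have hpos := gs_pos (fun x => f x - c) (by fun_prop)
    (fun x => by simp [hper x]) (fun x => sub_nonneg.2 (hc x)) y (sub_pos.2 hy) v hv
  have hsplit : (∫ x in (-Real.pi)..Real.pi, (f x - c) * Complex.normSq (gsQ v x))
      = (∫ x in (-Real.pi)..Real.pi, f x * Complex.normSq (gsQ v x))
        - ∫ x in (-Real.pi)..Real.pi, c * Complex.normSq (gsQ v x) := by
    rw [← intervalIntegral.integral_sub hint1 hint2]
    apply intervalIntegral.integral_congr
    intro x _
    ring
  have hval : (∫ x in (-Real.pi)..Real.pi, c * Complex.normSq (gsQ v x))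
      = c * (2 * Real.pi * ∑ l : Fin n, Complex.normSq (v l)) := by
    rw [intervalIntegral.integral_const_mul, gs_N]
  rw [hsplit, hval] at hpos
  have hkey : c * (2 * Real.pi * ∑ l : Fin n, Complex.normSq (v l)) <
      ∫ x in (-Real.pi)..Real.pi, f x * Complex.normSq (gsQ v x) := by linarith
  calc c * (∑ l : Fin n, Complex.normSq (v l))
      = (1 / (2 * Real.pi)) * (c * (2 * Real.pi * ∑ l : Fin n, Complex.normSq (v l))) := by
        field_simp
    _ < (1 / (2 * Real.pi)) * ∫ x in (-Real.pi)..Real.pi, f x * Complex.normSq (gsQ v x) := by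
        exact mul_lt_mul_of_pos_left hkey (by positivity)

lemma gs_neg_int {n : ℕ} (f : ℝ → ℝ) (v : Fin n → ℂ) :
    (∫ x in (-Real.pi)..Real.pi, (-f x) * Complex.normSq (gsQ v x))
      = -∫ x in (-Real.pi)..Real.pi, f x * Complex.normSq (gsQ v x) := by
  rw [← intervalIntegral.integral_neg]
  apply intervalIntegral.integral_congr
  intro x _
  ring

lemma gs_upper {n : ℕ} (f : ℝ → ℝ) (hf : Continuous f) (c : ℝ) (hc : ∀ x, f x ≤ c)
    (v : Fin n → ℂ) :
    (1 / (2 * Real.pi)) * (∫ x in (-Real.pi)..Real.pi, f x * Complex.normSq (gsQ v x)) ≤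
      c * (∑ l : Fin n, Complex.normSq (v l)) := by
  have := gs_lower (fun x => -f x) hf.neg (-c) (fun x => neg_le_neg (hc x)) v
  rw [gs_neg_int] at this
  linarith

lemma gs_upper_strict {n : ℕ} (f : ℝ → ℝ) (hf : Continuous f)
    (hper : ∀ x, f (x + 2 * Real.pi) = f x) (c : ℝ) (hc : ∀ x, f x ≤ c)
    (y : ℝ) (hy : f y < c) (v : Fin n → ℂ) (hv : v ≠ 0) :
    (1 / (2 * Real.pi)) * (∫ x in (-Real.pi)..Real.pi, f x * Complex.normSq (gsQ v x)) <
      c * (∑ l : Fin n, Complex.normSq (v l)) := by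
  have := gs_lower_strict (fun x => -f x) hf.neg (fun x => by simp [hper x]) (-c)
    (fun x => neg_le_neg (hc x)) y (neg_lt_neg hy) v hv
  rw [gs_neg_int] at this
  linarith
lemma gs_conj_integral {a b : ℝ} (g : ℝ → ℂ) :
    (∫ x in a..b, (starRingEnd ℂ) (g x)) = (starRingEnd ℂ) (∫ x in a..b, g x) := by
  simp [intervalIntegral, ← integral_conj]

/-- Grenander–Szegő: the Toeplitz matrix built from the Fourier
coefficients of a continuous `2π`-periodic real function `f` is Hermitian, its
eigenvalues are real and lie in `[f_min, f_max]`, strictly if `f_min < f_max`, and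
`T_n` is positive definite whenever `f_min ≥ 0` and `f_min < f_max`. -/
theorem grenander_szego (f : ℝ → ℝ) (hf : Continuous f)
    (hper : ∀ x : ℝ, f (x + 2 * Real.pi) = f x)
    (fmin fmax : ℝ) (hmin : IsLeast (Set.range f) fmin)
    (hmax : IsGreatest (Set.range f) fmax)
    (t : ℤ → ℂ)
    (ht : ∀ k : ℤ, t k = (1 / (2 * Real.pi)) *
      ∫ x : ℝ in (-Real.pi)..Real.pi, ((f x : ℂ) * Complex.exp (-Complex.I * (k : ℂ) * (x : ℂ))))
    (n : ℕ) (hn : 1 ≤ n)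
    (T : Matrix (Fin n) (Fin n) ℂ)
    (hT : ∀ j l : Fin n, T j l = t ((j : ℤ) - (l : ℤ))) :
    T.IsHermitian ∧
    (∀ μ ∈ spectrum ℂ T, μ.im = 0 ∧ fmin ≤ μ.re ∧ μ.re ≤ fmax) ∧
    (fmin < fmax → ∀ μ ∈ spectrum ℂ T, fmin < μ.re ∧ μ.re < fmax) ∧
    (0 ≤ fmin → fmin < fmax → T.PosDef) := by
  have hpi := Real.pi_pos
  have hfge : ∀ x, fmin ≤ f x := fun x => hmin.2 ⟨x, rfl⟩
  have hfle : ∀ x, f x ≤ fmax := fun x => hmax.2 ⟨x, rfl⟩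
  obtain ⟨ymax, hymax⟩ := hmax.1
  obtain ⟨ymin, hymin⟩ := hmin.1
  -- Hermitian
  have hconj : ∀ k : ℤ, (starRingEnd ℂ) (t k) = t (-k) := by
    intro k
    rw [ht k, ht (-k), map_mul]
    congr 1
    · simp [map_ofNat]
    · rw [← gs_conj_integral]
      apply intervalIntegral.integral_congr
      intro x _
      show (starRingEnd ℂ) (_ * _) = _
      rw [map_mul, ← Complex.exp_conj]
      congr 1
      · exact Complex.conj_ofReal _
      · simp only [map_mul, map_neg, Complex.conj_I, Complex.conj_ofReal, map_intCast]
        congr 1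
        push_cast
        ring
  have hHerm : T.IsHermitian := by
    show T.conjTranspose = T
    ext j l
    rw [Matrix.conjTranspose_apply, hT l j, hT j l]
    rw [show (j : ℤ) - (l : ℤ) = -((l : ℤ) - (j : ℤ)) by ring]
    exact hconj _
  -- quadratic form
  have hquad := gs_quad f hf t ht T hT
  set N : (Fin n → ℂ) → ℝ := fun v => ∑ l : Fin n, Complex.normSq (v l) with hN
  set R : (Fin n → ℂ) → ℝ := fun v =>
    (1 / (2 * Real.pi)) * ∫ x in (-Real.pi)..Real.pi, f x * Complex.normSq (gsQ v x) with hR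
  have hNpos : ∀ v : Fin n → ℂ, v ≠ 0 → 0 < N v := by
    intro v hv
    obtain ⟨i₀, hi₀⟩ := Function.ne_iff.mp hv
    exact Finset.sum_pos' (fun i _ => Complex.normSq_nonneg _)
      ⟨i₀, Finset.mem_univ _, Complex.normSq_pos.mpr hi₀⟩
  -- eigenvalue extraction
  have heig : ∀ μ ∈ spectrum ℂ T, ∃ v : Fin n → ℂ, v ≠ 0 ∧
      μ = ((R v / N v : ℝ) : ℂ) := by
    intro μ hμ
    rw [← AlgEquiv.spectrum_eq
      (Matrix.toLinAlgEquiv' : Matrix (Fin n) (Fin n) ℂ ≃ₐ[ℂ] _) T] at hμ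
    obtain ⟨v, hv⟩ :=
      (Module.End.hasEigenvalue_iff_mem_spectrum.mpr hμ).exists_hasEigenvector
    have hvne : v ≠ 0 := hv.2
    have hmul : T.mulVec v = μ • v := by
      rw [← Matrix.toLinAlgEquiv'_apply]
      exact hv.apply_eq_smul
    refine ⟨v, hvne, ?_⟩
    have hsv : dotProduct (star v) v = ((N v : ℝ) : ℂ) := by
      simp only [dotProduct, Pi.star_apply, RCLike.star_def, hN]
      push_cast
      exact Finset.sum_congr rfl fun i _ => Complex.normSq_eq_conj_mul_self.symm
    have h1 : dotProduct (star v) (T.mulVec v) = μ * ((N v : ℝ) : ℂ) := by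
      rw [hmul, dotProduct_smul, smul_eq_mul, hsv]
    have h2 : μ * ((N v : ℝ) : ℂ) = ((R v : ℝ) : ℂ) := by rw [← h1, hquad v]
    have hNne : ((N v : ℝ) : ℂ) ≠ 0 := by
      exact_mod_cast (hNpos v hvne).ne'
    rw [Complex.ofReal_div]
    field_simp
    linear_combination h2
  refine ⟨hHerm, ?_, ?_, ?_⟩
  · intro μ hμ
    obtain ⟨v, hv, rfl⟩ := heig μ hμ
    have hNv := hNpos v hv
    refine ⟨Complex.ofReal_im _, ?_, ?_⟩
    · rw [Complex.ofReal_re, le_div_iff₀ hNv]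
      exact le_trans (le_of_eq (by ring)) (gs_lower f hf fmin hfge v)
    · rw [Complex.ofReal_re, div_le_iff₀ hNv]
      exact le_trans (gs_upper f hf fmax hfle v) (le_of_eq (by ring))
  · intro hlt μ hμ
    obtain ⟨v, hv, rfl⟩ := heig μ hμ
    have hNv := hNpos v hv
    constructor
    · rw [Complex.ofReal_re, lt_div_iff₀ hNv]
      exact lt_of_le_of_lt (le_of_eq (by ring))
        (gs_lower_strict f hf hper fmin hfge ymax (hymax ▸ hlt) v hv)
    · rw [Complex.ofReal_re, div_lt_iff₀ hNv]
      exact lt_of_lt_of_le (gs_upper_strict f hf hper fmax hfle ymin (hymin ▸ hlt) v hv)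
        (le_of_eq (by ring))
  · intro h0 hlt
    refine Matrix.PosDef.of_dotProduct_mulVec_pos hHerm fun v hv => ?_
    rw [hquad v]
    rw [Complex.zero_lt_real]
    have h1 := gs_lower_strict f hf hper fmin hfge ymax (hymax ▸ hlt) v hv
    have h2 : 0 ≤ fmin * N v := mul_nonneg h0 (hNpos v hv).le
    calc (0:ℝ) ≤ fmin * N v := h2
      _ < _ := h1
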